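/- Let a < b be real numbers, let d be a positive integer, and let F : [a,b] × ℝ^d → ℝ be a continuous function such that for each fixed t ∈ [a,b] the function x ↦ F(t,x) is convex on ℝ^d. Then there exist a continuous function A : [a,b] → ℝ^d and a constant c₀ ∈ ℝ such that F(t,x) ≥ ⟨A(t), x⟩ + c₀ for all (t,x) ∈ [a,b] × ℝ^d, where ⟨·,·⟩ denotes the standard inner product on ℝ^d. -/

import Mathlib

open MeasureTheory Set

/-- If `p` is a global minimizer of `y ↦ g y + ‖y‖²/2` with `g` convex, then
`-p` is a subgradient of `g` at `p`, giving a global affine lower bound. -/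
theorem aux_subgrad {E : Type*} [NormedAddCommGroup E] [InnerProductSpace ℝ E]
    (g : E → ℝ) (hg : ConvexOn ℝ univ g) (p : E)
    (hp : ∀ y : E, g p + ‖p‖ ^ 2 / 2 ≤ g y + ‖y‖ ^ 2 / 2) (x : E) :
    (inner ℝ (-p) x : ℝ) + (g p + ‖p‖ ^ 2) ≤ g x := by
  have hip : (inner ℝ (-p) x : ℝ) = -(inner ℝ p x : ℝ) := by rw [inner_neg_left]
  have hxps : ‖x - p‖ ^ 2 = ‖x‖ ^ 2 - 2 * (inner ℝ p x : ℝ) + ‖p‖ ^ 2 := by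
    rw [norm_sub_sq_real, real_inner_comm]
  have key : ∀ lam : ℝ, 0 < lam → lam ≤ 1 →
      (inner ℝ (-p) x : ℝ) + (g p + ‖p‖ ^ 2) ≤ g x + lam * (‖x - p‖ ^ 2 / 2) := by
    intro lam hl0 hl1
    have hconv := hg.2 (mem_univ p) (mem_univ x) (by linarith : (0:ℝ) ≤ 1 - lam)
      (le_of_lt hl0) (by ring)
    simp only [smul_eq_mul] at hconv
    have hmin := hp ((1 - lam) • p + lam • x)
    have hexp : ‖(1 - lam) • p + lam • x‖ ^ 2
        = (1 - lam) ^ 2 * ‖p‖ ^ 2 + 2 * ((1 - lam) * lam) * (inner ℝ p x : ℝ)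
          + lam ^ 2 * ‖x‖ ^ 2 := by
      rw [norm_add_sq_real, norm_smul, norm_smul, real_inner_smul_left,
        real_inner_smul_right]
      rw [Real.norm_eq_abs, Real.norm_eq_abs,
        abs_of_nonneg (by linarith : (0:ℝ) ≤ 1 - lam), abs_of_nonneg hl0.le]
      ring
    rw [hexp] at hmin
    rw [hip, hxps]
    have hD : 0 ≤ lam * ((g x + lam * ((‖x‖ ^ 2 - 2 * (inner ℝ p x : ℝ) + ‖p‖ ^ 2) / 2))
        - (-(inner ℝ p x : ℝ) + (g p + ‖p‖ ^ 2))) := by nlinarith [hmin, hconv]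
    have := (mul_nonneg_iff_of_pos_left hl0).mp hD
    linarith
  -- pass to the limit lam → 0
  set K := ‖x - p‖ ^ 2 / 2 with hKdef
  have hK0 : 0 ≤ K := by positivity
  rcases eq_or_lt_of_le hK0 with hK | hKpos
  · have := key 1 one_pos le_rfl
    rw [← hK] at this; linarith
  · by_contra hcon
    push_neg at hcon
    set c := g x - ((inner ℝ (-p) x : ℝ) + (g p + ‖p‖ ^ 2)) with hc
    have hcneg : c < 0 := by simp only [hc]; linarith
    have hlam : 0 < min 1 (-c / (2 * K)) :=
      lt_min one_pos (div_pos (neg_pos.2 hcneg) (by linarith))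
    have hkey := key _ hlam (min_le_left _ _)
    have h2 : min 1 (-c / (2 * K)) * K ≤ (-c / (2 * K)) * K :=
      mul_le_mul_of_nonneg_right (min_le_right _ _) hK0
    have h3 : (-c / (2 * K)) * K = -c / 2 := by
      field_simp
    rw [h3] at h2
    simp only [hc] at hkey h2
    linarith

/-- Strong-convexity gap at the minimizer of the Moreau objective. -/
theorem aux_gap {E : Type*} [NormedAddCommGroup E] [InnerProductSpace ℝ E]
    (g : E → ℝ) (hg : ConvexOn ℝ univ g) (p : E)
    (hp : ∀ y : E, g p + ‖p‖ ^ 2 / 2 ≤ g y + ‖y‖ ^ 2 / 2) (y : E) :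
    ‖y - p‖ ^ 2 / 4 ≤ (g y + ‖y‖ ^ 2 / 2) - (g p + ‖p‖ ^ 2 / 2) := by
  have hmid := hp ((1/2 : ℝ) • p + (1/2 : ℝ) • y)
  have hconv := hg.2 (mem_univ p) (mem_univ y)
    (by norm_num : (0:ℝ) ≤ 1/2) (by norm_num : (0:ℝ) ≤ 1/2) (by norm_num)
  simp only [smul_eq_mul] at hconv
  have hpar : ‖(1/2 : ℝ) • p + (1/2 : ℝ) • y‖ ^ 2
      = ‖p‖ ^ 2 / 4 + (inner ℝ p y : ℝ) / 2 + ‖y‖ ^ 2 / 4 := by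
    rw [norm_add_sq_real, norm_smul, norm_smul, real_inner_smul_left,
      real_inner_smul_right]
    rw [Real.norm_eq_abs, abs_of_nonneg (by norm_num : (0:ℝ) ≤ 1/2)]
    ring
  have hsub : ‖y - p‖ ^ 2 = ‖y‖ ^ 2 - 2 * (inner ℝ p y : ℝ) + ‖p‖ ^ 2 := by
    rw [norm_sub_sq_real, real_inner_comm]
  rw [hpar] at hmid
  rw [hsub]
  linarith

/-- A jointly continuous function `F` on `[a,b] × ℝ^d` that is convex in the
second variable admits a uniform affine lower bound `F(t,x) ≥ ⟨A(t),x⟩ + c₀` with `A` continuous. -/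
theorem continuous_convex_family_affine_lower_bound
    (d : ℕ) (hd : 0 < d) (a b : ℝ) (hab : a < b)
    (F : ℝ → EuclideanSpace ℝ (Fin d) → ℝ)
    (hFcont : ContinuousOn (fun p : ℝ × EuclideanSpace ℝ (Fin d) => F p.1 p.2)
      (Set.Icc a b ×ˢ (Set.univ : Set (EuclideanSpace ℝ (Fin d)))))
    (hFconv : ∀ t ∈ Set.Icc a b, ConvexOn ℝ Set.univ (F t)) :
    ∃ (A : ℝ → EuclideanSpace ℝ (Fin d)) (c₀ : ℝ),
      ContinuousOn A (Set.Icc a b) ∧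
      ∀ t ∈ Set.Icc a b, ∀ x : EuclideanSpace ℝ (Fin d),
        (inner ℝ (A t) x : ℝ) + c₀ ≤ F t x := by
  classical
  -- bound on [a,b] × closedBall 0 1
  have hK1 : IsCompact ((Icc a b) ×ˢ (Metric.closedBall (0 : EuclideanSpace ℝ (Fin d)) 1)) :=
    isCompact_Icc.prod (isCompact_closedBall _ _)
  have hFc1 : ContinuousOn (fun p : ℝ × EuclideanSpace ℝ (Fin d) => F p.1 p.2)
      ((Icc a b) ×ˢ Metric.closedBall 0 1) :=
    hFcont.mono (prod_mono subset_rfl (subset_univ _))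
  obtain ⟨C, hC⟩ := hK1.exists_bound_of_continuousOn hFc1
  set M := max C 0 with hM
  have hM0 : 0 ≤ M := le_max_right _ _
  have hMb : ∀ t ∈ Icc a b, ∀ y : EuclideanSpace ℝ (Fin d), ‖y‖ ≤ 1 → |F t y| ≤ M := by
    intro t ht y hy
    have h1 := hC (t, y) ⟨ht, by simpa [Metric.mem_closedBall, dist_zero_right] using hy⟩
    rw [Real.norm_eq_abs] at h1
    exact le_trans h1 (le_max_left _ _)
  -- uniform linear lower bound
  have hlow : ∀ t ∈ Icc a b, ∀ y : EuclideanSpace ℝ (Fin d),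
      -(2 * M) * (1 + ‖y‖) ≤ F t y := by
    intro t ht y
    rcases eq_or_ne y 0 with rfl | hy
    · have h0 := abs_le.mp (hMb t ht 0 (by simp))
      simp only [norm_zero]
      nlinarith [h0.1, hM0]
    · have hn : 0 < ‖y‖ := norm_pos_iff.mpr hy
      set z : EuclideanSpace ℝ (Fin d) := (-(‖y‖⁻¹)) • y with hzdef
      have hz : ‖z‖ = 1 := by
        rw [hzdef, norm_smul, Real.norm_eq_abs, abs_neg, abs_inv, abs_of_nonneg hn.le,
          inv_mul_cancel₀ hn.ne']
      have hcomb : (1 / (1 + ‖y‖)) • y + (‖y‖ / (1 + ‖y‖)) • z = 0 := by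
        rw [hzdef, smul_smul, ← add_smul]
        have : 1 / (1 + ‖y‖) + ‖y‖ / (1 + ‖y‖) * -‖y‖⁻¹ = 0 := by
          field_simp
          ring
        rw [this, zero_smul]
      have hconv := (hFconv t ht).2 (mem_univ y) (mem_univ z)
        (by positivity : (0:ℝ) ≤ 1 / (1 + ‖y‖))
        (by positivity : (0:ℝ) ≤ ‖y‖ / (1 + ‖y‖))
        (by field_simp)
      rw [hcomb] at hconv
      simp only [smul_eq_mul] at hconv
      have hbz := abs_le.mp (hMb t ht z hz.le)
      have hb0 := abs_le.mp (hMb t ht 0 (by simp))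
      have hne : (1 + ‖y‖) ≠ 0 := by positivity
      rw [div_mul_eq_mul_div, div_mul_eq_mul_div, ← add_div,
        le_div_iff₀ (by positivity : (0:ℝ) < 1 + ‖y‖), one_mul] at hconv
      nlinarith [hconv, hbz.2, hb0.1, hM0, hn.le,
        mul_nonneg hn.le (by linarith : (0:ℝ) ≤ F t 0 + M),
        mul_nonneg hn.le (by linarith : (0:ℝ) ≤ M - F t z)]
  -- slices are continuous
  have hgcont : ∀ t ∈ Icc a b, Continuous (F t) := by
    intro t ht
    rw [← continuousOn_univ]
    have : ContinuousOn (fun y : EuclideanSpace ℝ (Fin d) => (t, y)) univ :=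
      (Continuous.continuousOn (by fun_prop))
    exact hFcont.comp this (fun y _ => ⟨ht, mem_univ _⟩)
  -- radius and existence of Moreau minimizers
  set R := 4 * M + 3 with hRdef
  have hR0 : 0 < R := by positivity
  have hmin : ∀ t ∈ Icc a b, ∃ p : EuclideanSpace ℝ (Fin d), ‖p‖ ≤ R ∧
      ∀ y, F t p + ‖p‖ ^ 2 / 2 ≤ F t y + ‖y‖ ^ 2 / 2 := by
    intro t ht
    have hball : IsCompact (Metric.closedBall (0 : EuclideanSpace ℝ (Fin d)) R) :=
      isCompact_closedBall _ _
    have hcont : Continuous (fun y : EuclideanSpace ℝ (Fin d) => F t y + ‖y‖ ^ 2 / 2) := by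
      exact ((hgcont t ht).add (by fun_prop))
    obtain ⟨p, hpmem, hpmin⟩ := hball.exists_isMinOn ⟨0, by simp [hR0.le]⟩ hcont.continuousOn
    rw [isMinOn_iff] at hpmin
    rw [Metric.mem_closedBall, dist_zero_right] at hpmem
    refine ⟨p, hpmem, fun y => ?_⟩
    by_cases hy : ‖y‖ ≤ R
    · exact hpmin y (by rwa [Metric.mem_closedBall, dist_zero_right])
    · push_neg at hy
      have h1 := hpmin 0 (by simp [hR0.le])
      have h2 := abs_le.mp (hMb t ht 0 (by simp))
      have h3 := hlow t ht y
      simp only [norm_zero] at h1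
      nlinarith [mul_nonneg (by linarith : (0:ℝ) ≤ ‖y‖ - R) (norm_nonneg y), hM0]
  choose! p hpR hpmin using hmin
  -- uniform continuity on [a,b] × closedBall 0 R
  have hKR : IsCompact ((Icc a b) ×ˢ Metric.closedBall (0 : EuclideanSpace ℝ (Fin d)) R) :=
    isCompact_Icc.prod (isCompact_closedBall _ _)
  have hFcR : ContinuousOn (fun q : ℝ × EuclideanSpace ℝ (Fin d) => F q.1 q.2)
      ((Icc a b) ×ˢ Metric.closedBall 0 R) :=
    hFcont.mono (prod_mono subset_rfl (subset_univ _))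
  have hUC := hKR.uniformContinuousOn_of_continuous hFcR
  rw [Metric.uniformContinuousOn_iff] at hUC
  -- continuity of p
  have hpcont : ContinuousOn p (Icc a b) := by
    rw [Metric.continuousOn_iff]
    intro t ht ε hε
    obtain ⟨δ, hδ0, hδ⟩ := hUC (ε ^ 2 / 9) (by positivity)
    refine ⟨δ, hδ0, fun s hs hst => ?_⟩
    have hpsmem : p s ∈ Metric.closedBall (0 : EuclideanSpace ℝ (Fin d)) R := by
      rw [Metric.mem_closedBall, dist_zero_right]; exact hpR s hs
    have hptmem : p t ∈ Metric.closedBall (0 : EuclideanSpace ℝ (Fin d)) R := by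
      rw [Metric.mem_closedBall, dist_zero_right]; exact hpR t ht
    have hd1 : dist ((t, p s) : ℝ × EuclideanSpace ℝ (Fin d)) (s, p s) < δ := by
      rw [Prod.dist_eq, dist_self, max_eq_left dist_nonneg, dist_comm]; exact hst
    have hd2 : dist ((s, p t) : ℝ × EuclideanSpace ℝ (Fin d)) (t, p t) < δ := by
      rw [Prod.dist_eq, dist_self, max_eq_left dist_nonneg]; exact hst
    have e1 := hδ (t, p s) ⟨ht, hpsmem⟩ (s, p s) ⟨hs, hpsmem⟩ hd1
    have e2 := hδ (s, p t) ⟨hs, hptmem⟩ (t, p t) ⟨ht, hptmem⟩ hd2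
    rw [Real.dist_eq] at e1 e2
    have e1' := abs_lt.mp e1
    have e2' := abs_lt.mp e2
    have hgap := aux_gap (F t) (hFconv t ht) (p t) (hpmin t ht) (p s)
    have hsmin := hpmin s hs (p t)
    rw [dist_eq_norm]
    nlinarith [hgap, hsmin, e1'.1, e1'.2, e2'.1, e2'.2, norm_nonneg (p s - p t), hε]
  -- global minimum of F on the compact set, used as c₀
  obtain ⟨q, hqmem, hqmin⟩ := hKR.exists_isMinOn
    ⟨(a, 0), ⟨left_mem_Icc.mpr hab.le, by simp [hR0.le]⟩⟩ hFcR
  rw [isMinOn_iff] at hqmin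
  refine ⟨fun t => -(p t), F q.1 q.2, hpcont.neg, ?_⟩
  intro t ht x
  have hsub := aux_subgrad (F t) (hFconv t ht) (p t) (hpmin t ht) x
  have hptmem : p t ∈ Metric.closedBall (0 : EuclideanSpace ℝ (Fin d)) R := by
    rw [Metric.mem_closedBall, dist_zero_right]; exact hpR t ht
  have hc := hqmin (t, p t) ⟨ht, hptmem⟩
  have hnn : (0:ℝ) ≤ ‖p t‖ ^ 2 := sq_nonneg _
  simp only
  linarith
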